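/- Correctness of the subset-selection procedure: in the single-enterprise model, for every subset S of the players define the collateral vector c(S) by giving each player in S a full collateral and each player i ∈ S^c the collateral max(0, x_i[1 − (1+α)(1 − Z/(Σ_{j∈S} x_j + Σ_{j∈S^c, x_j ≥ x_i (with ties by index)} x_j))]), i.e., processing S^c in non-increasing order of investment amounts. Then each c(S) is a viable collateral vector, and the minimum over all subsets S of the total collateral of c(S) equals the optimal value of the single-enterprise collateral minimization problem. -/

import Mathlib

open scoped BigOperators Classical

namespace SSHelp
noncomputable def mval (A C s : ℝ) : ℝ := max 0 (C / s - A)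
noncomputable def wval (A C s : ℝ) : ℝ := max 0 (min 1 (C / s - A))

/-- partial-collateral total for a list of investments processed in order,
starting from accumulated sum `b`. -/
lemma wval_eq_mval {A C s : ℝ} (h : C / s - A ≤ 1) : wval A C s = mval A C s := by
  unfold wval mval; rw [min_eq_right h]

lemma wval_eq_one {A C s : ℝ} (h : 1 ≤ C / s - A) : wval A C s = 1 := by
  unfold wval; rw [min_eq_left h, max_eq_right zero_le_one]

noncomputable def Fsum (A C : ℝ) : ℝ → List ℝ → ℝ
  | _, [] => 0
  | b, a :: l => a * mval A C (b + a) + Fsum A C (b + a) l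

noncomputable def Gsum (A C : ℝ) : ℝ → List ℝ → ℝ
  | _, [] => 0
  | b, a :: l => a * wval A C (b + a) + Gsum A C (b + a) l

@[simp] lemma Fsum_nil (A C b : ℝ) : Fsum A C b [] = 0 := rfl
@[simp] lemma Fsum_cons (A C b a : ℝ) (l : List ℝ) :
    Fsum A C b (a :: l) = a * mval A C (b + a) + Fsum A C (b + a) l := rfl
@[simp] lemma Gsum_nil (A C b : ℝ) : Gsum A C b [] = 0 := rfl
@[simp] lemma Gsum_cons (A C b a : ℝ) (l : List ℝ) :
    Gsum A C b (a :: l) = a * wval A C (b + a) + Gsum A C (b + a) l := rfl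

/-- the exchange inequality: putting the bigger element first does not
increase the two relevant terms. -/
lemma exchange {A C b a h : ℝ} (hA : 0 ≤ A) (hC : 0 ≤ C) (hb : 0 ≤ b)
    (ha : 0 < a) (hah : a ≤ h) :
    h * mval A C (b + h) + a * mval A C (b + a + h) ≤
      a * mval A C (b + a) + h * mval A C (b + a + h) := by
  have hh : 0 < h := lt_of_lt_of_le ha hah
  have hs1 : (0:ℝ) < b + a := by linarith
  have hs2 : (0:ℝ) < b + h := by linarith
  have hs3 : (0:ℝ) < b + a + h := by linarith
  rcases le_or_gt (C / (b + a + h) - A) 0 with hB | hB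
  · -- mval at B is 0
    have m3 : mval A C (b + a + h) = 0 := max_eq_left hB
    rw [m3, mul_zero, mul_zero, add_zero, add_zero]
    rcases le_or_gt (C / (b + h) - A) 0 with h2 | h2
    · rw [mval, max_eq_left h2, mul_zero]
      exact mul_nonneg ha.le (le_max_left _ _)
    · have h1 : 0 < C / (b + a) - A := by
        have : C / (b + h) ≤ C / (b + a) := div_le_div_of_nonneg_left hC hs1 (by linarith)
        linarith
      rw [mval, mval, max_eq_right h2.le, max_eq_right h1.le]
      -- h * (C/(b+h) - A) ≤ a * (C/(b+a) - A)
      have hCB : C ≤ A * (b + a + h) := by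
        rw [sub_nonpos, div_le_iff₀ hs3] at hB; linarith [hB]
      rw [div_sub' (ne_of_gt hs2), div_sub' (ne_of_gt hs1)]
      rw [← mul_div_assoc, ← mul_div_assoc, div_le_div_iff₀ hs2 hs1]
      have f1 : A*b*(b+a+h) ≤ A*((b+a)*(b+h)) := by nlinarith [mul_nonneg (mul_nonneg hA ha.le) hh.le]
      have f2 : C*b ≤ A*b*(b+a+h) := by nlinarith [mul_le_mul_of_nonneg_right hCB hb]
      nlinarith [mul_nonneg (sub_nonneg.2 hah) (by nlinarith : (0:ℝ) ≤ A*((b+a)*(b+h)) - C*b)]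
    -- fallback
  · -- all three positive
    have h2 : 0 < C / (b + h) - A := by
      have : C / (b + a + h) ≤ C / (b + h) := div_le_div_of_nonneg_left hC hs2 (by linarith)
      linarith
    have h1 : 0 < C / (b + a) - A := by
      have : C / (b + h) ≤ C / (b + a) := div_le_div_of_nonneg_left hC hs1 (by linarith)
      linarith
    rw [mval, mval, mval, max_eq_right hB.le, max_eq_right h2.le, max_eq_right h1.le]
    have key : h * (C / (b + h)) + a * (C / (b + a + h)) ≤
        a * (C / (b + a)) + h * (C / (b + a + h)) := by
      rw [← mul_div_assoc, ← mul_div_assoc, ← mul_div_assoc, ← mul_div_assoc]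
      rw [div_add_div _ _ (ne_of_gt hs2) (ne_of_gt hs3), div_add_div _ _ (ne_of_gt hs1) (ne_of_gt hs3)]
      rw [div_le_div_iff₀ (by positivity) (by positivity)]
      nlinarith [mul_nonneg (mul_nonneg (mul_nonneg hC ha.le) hh.le) (sub_nonneg.2 hah), mul_pos hs1 hs3, mul_pos hs2 hs3, mul_nonneg hC hb]
    nlinarith [key]

lemma Gsum_eq_Fsum {A C : ℝ} (hA : 0 ≤ A) :
    ∀ (l : List ℝ) (b : ℝ), (∀ a ∈ l, 0 < a) → 0 < b → C ≤ (1 + A) * b →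
      Gsum A C b l = Fsum A C b l
  | [], _, _, _, _ => rfl
  | a :: l, b, hl, hb, hCb => by
    have ha : 0 < a := hl a (List.mem_cons_self)
    have hb' : 0 < b + a := by linarith
    have h1 : C / (b + a) - A ≤ 1 := by
      rw [sub_le_iff_le_add, div_le_iff₀ hb']
      nlinarith
    rw [Gsum_cons, Fsum_cons, Gsum_eq_Fsum hA l (b + a) (fun x hx => hl x (List.mem_cons_of_mem _ hx)) hb' (by nlinarith)]
    unfold wval mval
    rw [min_eq_right h1]

/-- inserting an element into a sorted (non-increasing) list not exceeding it
does not increase `Fsum`. -/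
lemma Fsum_orderedInsert_le {A C : ℝ} (hA : 0 ≤ A) (hC : 0 ≤ C) :
    ∀ (l : List ℝ) (b a : ℝ), (∀ y ∈ l, 0 < y) → 0 ≤ b → 0 < a →
      l.Pairwise (fun p q => q ≤ p) →
      Fsum A C b (l.orderedInsert (fun p q => q ≤ p) a) ≤ Fsum A C b (a :: l)
  | [], b, a, _, _, _, _ => le_refl _
  | h :: l, b, a, hl, hb, ha, hs => by
    by_cases hah : h ≤ a
    · rw [List.orderedInsert]
      simp only [hah, if_pos]
      exact le_refl _
    · push_neg at hah
      have hh : 0 < h := hl h (List.mem_cons_self)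
      rw [List.orderedInsert]
      simp only [hah.not_ge, if_false]
      rw [Fsum_cons, Fsum_cons, Fsum_cons]
      have ih := Fsum_orderedInsert_le hA hC l (b + h) a
        (fun y hy => hl y (List.mem_cons_of_mem _ hy)) (by linarith) ha
        (List.Pairwise.of_cons hs)
      rw [Fsum_cons] at ih
      have exch := exchange (b := b) hA hC hb ha hah.le
      have : b + h + a = b + a + h := by ring
      rw [this] at ih
      linarith [ih, exch]

lemma Fsum_insertionSort_le {A C : ℝ} (hA : 0 ≤ A) (hC : 0 ≤ C) :
    ∀ (l : List ℝ) (b : ℝ), (∀ y ∈ l, 0 < y) → 0 ≤ b →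
      Fsum A C b (l.insertionSort (fun p q => q ≤ p)) ≤ Fsum A C b l
  | [], _, _, _ => le_refl _
  | a :: l, b, hl, hb => by
    have ha : 0 < a := hl a (List.mem_cons_self)
    rw [List.insertionSort]
    have hpos : ∀ y ∈ l.insertionSort (fun p q => q ≤ p), 0 < y := fun y hy =>
      hl y (List.mem_cons_of_mem _ ((List.perm_insertionSort _ l).mem_iff.mp hy))
    calc Fsum A C b ((l.insertionSort _).orderedInsert (fun p q => q ≤ p) a)
        ≤ Fsum A C b (a :: l.insertionSort (fun p q => q ≤ p)) :=
          Fsum_orderedInsert_le hA hC _ b a hpos hb ha (List.pairwise_insertionSort _ l)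
      _ ≤ Fsum A C b (a :: l) := by
          rw [Fsum_cons, Fsum_cons]
          have := Fsum_insertionSort_le hA hC l (b + a) (fun y hy => hl y (List.mem_cons_of_mem _ hy)) (by linarith)
          linarith

/-- Among all orders of a multiset of positive reals, the non-increasing one
minimizes `Fsum`. -/
lemma Fsum_sorted_le {A C : ℝ} (hA : 0 ≤ A) (hC : 0 ≤ C) {l₁ l₂ : List ℝ}
    (hp : l₁.Perm l₂) (hs : l₁.Pairwise (fun p q => q ≤ p))
    (hpos : ∀ y ∈ l₂, 0 < y) {b : ℝ} (hb : 0 ≤ b) :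
    Fsum A C b l₁ ≤ Fsum A C b l₂ := by
  have : l₁ = l₂.insertionSort (fun p q => q ≤ p) := by
    refine List.Perm.eq_of_pairwise (fun a b _ _ h1 h2 => le_antisymm h2 h1) hs
      (List.pairwise_insertionSort _ l₂) (hp.trans (List.perm_insertionSort _ l₂).symm)
  rw [this]
  exact Fsum_insertionSort_le hA hC l₂ b hpos hb

end SSHelp

/-- The single-enterprise (star) model: one enterprise with operational cost
`Z ≥ 0` and interest rate `α > 0`, and `n` potential investors, where investor
`i` may invest the amount `x i > 0`.  The enterprise is profitable:
`(1 + α) * (∑ x - Z) ≥ ∑ x`. -/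
structure StarGame (n : ℕ) where
  x : Fin n → ℝ
  Z : ℝ
  α : ℝ
  x_pos : ∀ i, 0 < x i
  Z_nonneg : 0 ≤ Z
  α_pos : 0 < α
  profitable : (∑ i, x i) ≤ (1 + α) * ((∑ i, x i) - Z)

namespace StarGame

variable {n : ℕ}

/-- The enterprise return to a cooperating investor `i` when `S` is the set of
cooperators: `R_i = max (0, (1+α)(∑_{j∈S} x_j − Z) · x_i / ∑_{j∈S} x_j)`
(in particular it is `0` if the enterprise defaults,
i.e. if `∑_{j∈S} x_j < Z`). -/
noncomputable def ret (G : StarGame n) (S : Finset (Fin n)) (i : Fin n) : ℝ :=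
  max 0 ((1 + G.α) * ((∑ j ∈ S, G.x j) - G.Z) * (G.x i / ∑ j ∈ S, G.x j))

/-- The utility of a cooperating investor `i` with collateral `c i` when the
set of cooperators is `S` (the collateral is realized when the return falls
below the invested amount). -/
noncomputable def coopUtil (G : StarGame n) (c : Fin n → ℝ) (S : Finset (Fin n))
    (i : Fin n) : ℝ :=
  if G.ret S i ≤ G.x i - c i then c i + G.ret S i
  else if G.ret S i ≤ G.x i then G.x i
  else G.ret S i

/-- The utility of investor `i` under the profile with cooperator set `S`. -/
noncomputable def utility (G : StarGame n) (c : Fin n → ℝ) (S : Finset (Fin n))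
    (i : Fin n) : ℝ :=
  if i ∈ S then G.coopUtil c S i else G.x i

/-- `S` is a Nash equilibrium of the game induced by the collateral vector `c`,
with ties broken towards cooperating: every cooperator weakly prefers
cooperating, and every defector strictly prefers defecting. -/
def NashEq (G : StarGame n) (c : Fin n → ℝ) (S : Finset (Fin n)) : Prop :=
  (∀ i ∈ S, G.x i ≤ G.coopUtil c S i) ∧
    ∀ i ∉ S, G.coopUtil c (insert i S) i < G.x i

/-- A viable collateral vector: nonnegative collaterals for which all-cooperate
is the unique Nash equilibrium of the induced game. -/
def Viable (G : StarGame n) (c : Fin n → ℝ) : Prop :=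
  (∀ i, 0 ≤ c i) ∧ G.NashEq c Finset.univ ∧ ∀ S, G.NashEq c S → S = Finset.univ

/-- The total collateral of a collateral vector. -/
noncomputable def total (c : Fin n → ℝ) : ℝ := ∑ i, c i

/-- An optimal solution of the single-enterprise collateral minimization
problem: a viable collateral vector of minimum total collateral. -/
def Optimal (G : StarGame n) (c : Fin n → ℝ) : Prop :=
  G.Viable c ∧ ∀ c', G.Viable c' → total c ≤ total c'

/-- A minimal collateral vector: viable, and decreasing any single entry by any
`ε > 0` destroys viability. -/
def Minimal (G : StarGame n) (c : Fin n → ℝ) : Prop :=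
  G.Viable c ∧ ∀ (i : Fin n) (ε : ℝ), 0 < ε → ¬ G.Viable (Function.update c i (c i - ε))

/-- The permutation `σ` (listing the players in the order
`σ 1, σ 2, …, σ n`) is an order of iterated elimination of strictly dominated
strategies for the collateral vector `c`, leading to all-cooperate: at every
position `t`, given that the players at earlier positions cooperate, player
`σ t` strictly prefers to cooperate (ties broken towards cooperating) whatever
the remaining players do. -/
def ElimOrder (G : StarGame n) (c : Fin n → ℝ) (σ : Equiv.Perm (Fin n)) : Prop :=
  ∀ (t : Fin n) (S : Finset (Fin n)), (∀ s, s < t → σ s ∈ S) →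
    G.x (σ t) ≤ G.coopUtil c (insert (σ t) S) (σ t)

end StarGame

namespace StarGame

/-- The collateral vector `c(S)` of the subset-selection procedure
(Corollary 2): every player of `S` receives a full collateral, and the players
of `Sᶜ`, processed in non-increasing order of investment amounts (ties broken
by index), receive the partial collaterals of Theorem 6. -/
noncomputable def subsetCollateral (G : StarGame n) (S : Finset (Fin n)) :
    Fin n → ℝ :=
  fun i =>
    if i ∈ S then G.x i
    else
      max 0 (G.x i * (1 - (1 + G.α) *
        (1 - G.Z / ((∑ j ∈ S, G.x j) +
          ∑ j ∈ Sᶜ.filter (fun j => G.x i < G.x j ∨ (G.x j = G.x i ∧ j ≤ i)), G.x j))))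

end StarGame

namespace StarGame
variable {n : ℕ} (G : StarGame n)

lemma le_coopUtil_iff {c : Fin n → ℝ} {S : Finset (Fin n)} {i : Fin n} :
    G.x i ≤ G.coopUtil c S i ↔ G.x i - c i ≤ G.ret S i := by
  unfold coopUtil
  split_ifs with h1 h2
  · constructor
    · intro h; linarith
    · intro h; linarith
  · simp only [le_refl, true_iff]; linarith [not_le.mp h1]
  · constructor
    · intro _; linarith [not_le.mp h1]
    · intro _; linarith [not_le.mp h2]

lemma coopUtil_lt_iff {c : Fin n → ℝ} {S : Finset (Fin n)} {i : Fin n} :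
    G.coopUtil c S i < G.x i ↔ G.ret S i < G.x i - c i := by
  rw [← not_le, ← not_le, G.le_coopUtil_iff]

lemma ret_nonneg (S : Finset (Fin n)) (i : Fin n) : 0 ≤ G.ret S i := le_max_left _ _

lemma sum_x_nonneg (S : Finset (Fin n)) : 0 ≤ ∑ j ∈ S, G.x j :=
  Finset.sum_nonneg fun j _ => (G.x_pos j).le

lemma sum_x_pos {S : Finset (Fin n)} {i : Fin n} (hi : i ∈ S) : 0 < ∑ j ∈ S, G.x j :=
  Finset.sum_pos' (fun j _ => (G.x_pos j).le) ⟨i, hi, G.x_pos i⟩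

lemma ret_eq {S : Finset (Fin n)} (hS : 0 < ∑ j ∈ S, G.x j) (i : Fin n) :
    G.ret S i = G.x i * max 0 (1 + G.α - (1 + G.α) * G.Z / (∑ j ∈ S, G.x j)) := by
  unfold ret
  rw [mul_max_of_nonneg _ _ (G.x_pos i).le, mul_zero]
  congr 1
  field_simp

/-- lower bound for the return: if the cooperating set `T` has investment sum
at least `a > 0` then the return to `i ∈ T` is at least the return computed
with sum `a`. -/
lemma ret_lb {T : Finset (Fin n)} {i : Fin n} (hi : i ∈ T) {a : ℝ}
    (ha : 0 < a) (hat : a ≤ ∑ j ∈ T, G.x j) :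
    G.x i * (1 + G.α - (1 + G.α) * G.Z / a) ≤ G.ret T i := by
  have ht : 0 < ∑ j ∈ T, G.x j := lt_of_lt_of_le ha hat
  rw [G.ret_eq ht]
  have hdiv : (1 + G.α) * G.Z / (∑ j ∈ T, G.x j) ≤ (1 + G.α) * G.Z / a :=
    div_le_div_of_nonneg_left (by nlinarith [G.Z_nonneg, G.α_pos]) ha hat
  have : (1 + G.α - (1 + G.α) * G.Z / a) ≤ max 0 (1 + G.α - (1 + G.α) * G.Z / (∑ j ∈ T, G.x j)) :=
    le_trans (by linarith) (le_max_right _ _)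
  exact mul_le_mul_of_nonneg_left this (G.x_pos i).le

/-- the processing order: non-increasing investments, ties by index. -/
def rel (i j : Fin n) : Prop := G.x j < G.x i ∨ (G.x i = G.x j ∧ i ≤ j)

lemma rel_refl (i : Fin n) : G.rel i i := Or.inr ⟨rfl, le_refl i⟩

lemma rel_total (i j : Fin n) : G.rel i j ∨ G.rel j i := by
  rcases lt_trichotomy (G.x i) (G.x j) with h | h | h
  · exact Or.inr (Or.inl h)
  · rcases le_total i j with hij | hij
    · exact Or.inl (Or.inr ⟨h, hij⟩)
    · exact Or.inr (Or.inr ⟨h.symm, hij⟩)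
  · exact Or.inl (Or.inl h)

lemma rel_trans {i j k : Fin n} (h1 : G.rel i j) (h2 : G.rel j k) : G.rel i k := by
  rcases h1 with h1 | ⟨h1, h1'⟩ <;> rcases h2 with h2 | ⟨h2, h2'⟩
  · exact Or.inl (lt_trans h2 h1)
  · exact Or.inl (h2 ▸ h1)
  · exact Or.inl (h1 ▸ h2)
  · exact Or.inr ⟨h1.trans h2, h1'.trans h2'⟩

lemma rel_antisymm {i j : Fin n} (h1 : G.rel i j) (h2 : G.rel j i) : i = j := by
  rcases h1 with h1 | ⟨h1, h1'⟩ <;> rcases h2 with h2 | ⟨h2, h2'⟩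
  · exact absurd (lt_trans h1 h2) (lt_irrefl _)
  · exact absurd h1 (h2 ▸ lt_irrefl _)
  · exact absurd h2 (h1 ▸ lt_irrefl _)
  · exact le_antisymm h1' h2'

/-- the filter in `subsetCollateral` is exactly the set of `rel`-predecessors
of `i` in `Sᶜ`. -/
lemma filter_eq (S : Finset (Fin n)) (i : Fin n) :
    Sᶜ.filter (fun j => G.x i < G.x j ∨ (G.x j = G.x i ∧ j ≤ i)) =
      Sᶜ.filter (fun j => G.rel j i) := by
  apply Finset.filter_congr
  intro j _
  simp [rel]

lemma subsetCollateral_nonneg (S : Finset (Fin n)) (i : Fin n) :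
    0 ≤ G.subsetCollateral S i := by
  unfold subsetCollateral
  split_ifs
  · exact (G.x_pos i).le
  · exact le_max_left _ _

/-- the key inequality: if all of `S` and all `rel`-predecessors of `i`
cooperate, then `i` prefers to cooperate under the collateral `c(S)`. -/
lemma keyIneq (S : Finset (Fin n)) {T : Finset (Fin n)} {i : Fin n}
    (hiT : i ∈ T) (hST : S ⊆ T) (hFT : Sᶜ.filter (fun j => G.rel j i) ⊆ T) :
    G.x i - G.subsetCollateral S i ≤ G.ret T i := by
  unfold subsetCollateral
  by_cases hiS : i ∈ S
  · rw [if_pos hiS]; simpa using G.ret_nonneg T i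
  · rw [if_neg hiS]
    have hFrel : Sᶜ.filter (fun j => G.x i < G.x j ∨ (G.x j = G.x i ∧ j ≤ i)) =
        Sᶜ.filter (fun j => G.rel j i) := G.filter_eq S i
    rw [hFrel]
    have hdisj : Disjoint S (Sᶜ.filter (fun j => G.rel j i)) :=
      Finset.disjoint_left.2 fun a haS haF =>
        (Finset.mem_compl.1 (Finset.mem_filter.1 haF).1) haS
    have hiF : i ∈ Sᶜ.filter (fun j => G.rel j i) :=
      Finset.mem_filter.2 ⟨Finset.mem_compl.2 hiS, G.rel_refl i⟩
    have hsum : (∑ j ∈ S, G.x j) + ∑ j ∈ Sᶜ.filter (fun j => G.rel j i), G.x j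
        = ∑ j ∈ S ∪ Sᶜ.filter (fun j => G.rel j i), G.x j :=
      (Finset.sum_union hdisj).symm
    have ha : 0 < (∑ j ∈ S, G.x j) + ∑ j ∈ Sᶜ.filter (fun j => G.rel j i), G.x j := by
      rw [hsum]
      exact G.sum_x_pos (Finset.mem_union_right _ hiF)
    have hat : (∑ j ∈ S, G.x j) + ∑ j ∈ Sᶜ.filter (fun j => G.rel j i), G.x j
        ≤ ∑ j ∈ T, G.x j := by
      rw [hsum]
      refine Finset.sum_le_sum_of_subset_of_nonneg ?_ (fun j _ _ => (G.x_pos j).le)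
      rw [Finset.union_subset_iff]
      exact ⟨hST, hFT⟩
    have hlb := G.ret_lb hiT ha hat
    have hmax : G.x i * (1 - (1 + G.α) * (1 - G.Z /
          ((∑ j ∈ S, G.x j) + ∑ j ∈ Sᶜ.filter (fun j => G.rel j i), G.x j))) ≤
        max 0 (G.x i * (1 - (1 + G.α) * (1 - G.Z /
          ((∑ j ∈ S, G.x j) + ∑ j ∈ Sᶜ.filter (fun j => G.rel j i), G.x j)))) :=
      le_max_right _ _
    have heq : G.x i * (1 + G.α - (1 + G.α) * G.Z /
          ((∑ j ∈ S, G.x j) + ∑ j ∈ Sᶜ.filter (fun j => G.rel j i), G.x j)) =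
        G.x i - G.x i * (1 - (1 + G.α) * (1 - G.Z /
          ((∑ j ∈ S, G.x j) + ∑ j ∈ Sᶜ.filter (fun j => G.rel j i), G.x j))) := by
      ring
    linarith [hlb, hmax]

/-- Part 1: every collateral vector of the subset-selection procedure is
viable. -/
theorem viable_subsetCollateral (S : Finset (Fin n)) :
    G.Viable (G.subsetCollateral S) := by
  refine ⟨G.subsetCollateral_nonneg S, ⟨fun i _ => ?_, fun i hi => absurd (Finset.mem_univ i) hi⟩, ?_⟩
  · exact G.le_coopUtil_iff.2
      (G.keyIneq S (Finset.mem_univ i) (Finset.subset_univ _) (Finset.subset_univ _))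
  · intro S' hNE
    by_contra hne
    -- the set of defectors is nonempty
    have hD : (S'ᶜ).Nonempty := by
      rw [← Finset.card_pos, Finset.card_compl]
      have h1 : S'.card < Finset.univ.card := Finset.card_lt_card
        (lt_of_le_of_ne (Finset.subset_univ S') hne)
      have h2 : (Finset.univ : Finset (Fin n)).card = Fintype.card (Fin n) :=
        Finset.card_univ
      omega
    -- defectors with full collateral are impossible
    have hDS : ∀ j ∈ S'ᶜ, j ∉ S := by
      intro j hj hjS
      have hjS' : j ∉ S' := Finset.mem_compl.1 hj
      have hlt := hNE.2 j hjS'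
      rw [G.coopUtil_lt_iff] at hlt
      have : G.subsetCollateral S j = G.x j := by unfold subsetCollateral; rw [if_pos hjS]
      rw [this] at hlt
      simp only [sub_self] at hlt
      exact absurd hlt (not_lt.2 (G.ret_nonneg _ _))
    -- pick the earliest defector in the processing order
    obtain ⟨i, hiD, himax⟩ := Finset.exists_max_image S'ᶜ
      (fun j => toLex (G.x j, OrderDual.toDual j)) hD
    have hirel : ∀ j ∈ S'ᶜ, G.rel i j := by
      intro j hj
      rcases (Prod.Lex.le_iff).1 (himax j hj) with h | ⟨h1, h2⟩
      · exact Or.inl h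
      · exact Or.inr ⟨h1.symm, OrderDual.toDual_le_toDual.1 h2⟩
    have hiS' : i ∉ S' := Finset.mem_compl.1 hiD
    have hST : S ⊆ insert i S' := by
      intro j hj
      by_contra hjn
      have : j ∈ S'ᶜ := Finset.mem_compl.2 (fun hj' => hjn (Finset.mem_insert_of_mem hj'))
      exact hDS j this hj
    have hFT : Sᶜ.filter (fun j => G.rel j i) ⊆ insert i S' := by
      intro j hj
      by_contra hjn
      have hjD : j ∈ S'ᶜ := Finset.mem_compl.2 (fun hj' => hjn (Finset.mem_insert_of_mem hj'))
      have hji : G.rel j i := (Finset.mem_filter.1 hj).2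
      have hij : G.rel i j := hirel j hjD
      have : i = j := G.rel_antisymm hij hji
      exact hjn (this ▸ Finset.mem_insert_self i S')
    have hkey := G.keyIneq S (Finset.mem_insert_self i S') hST hFT
    have hlt := hNE.2 i hiS'
    rw [G.coopUtil_lt_iff] at hlt
    linarith

lemma ret_mono {T T' : Finset (Fin n)} (h : T ⊆ T') (j : Fin n) :
    G.ret (insert j T) j ≤ G.ret (insert j T') j := by
  have hs : 0 < ∑ i ∈ insert j T, G.x i := G.sum_x_pos (Finset.mem_insert_self j T)
  have hss : ∑ i ∈ insert j T, G.x i ≤ ∑ i ∈ insert j T', G.x i :=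
    Finset.sum_le_sum_of_subset_of_nonneg (Finset.insert_subset_insert j h)
      (fun i _ _ => (G.x_pos i).le)
  rw [G.ret_eq hs, G.ret_eq (lt_of_lt_of_le hs hss)]
  refine mul_le_mul_of_nonneg_left (max_le_max le_rfl ?_) (G.x_pos j).le
  have : (1 + G.α) * G.Z / (∑ i ∈ insert j T', G.x i) ≤
      (1 + G.α) * G.Z / (∑ i ∈ insert j T, G.x i) :=
    div_le_div_of_nonneg_left (by nlinarith [G.Z_nonneg, G.α_pos]) hs hss
  linarith

/-- If `c` is viable, then from any non-full cooperator set some further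
player prefers to join. -/
lemma progress {c : Fin n → ℝ} (hv : G.Viable c) :
    ∀ T : Finset (Fin n), T ≠ Finset.univ →
      ∃ j, j ∉ T ∧ G.x j - c j ≤ G.ret (insert j T) j := by
  intro T hT
  by_contra hnone
  push_neg at hnone
  set Φ : Finset (Fin n) → Finset (Fin n) :=
    fun U => Finset.univ.filter (fun j => G.x j - c j ≤ G.ret (insert j U) j) with hΦ
  have hmono : ∀ U V, U ⊆ V → Φ U ⊆ Φ V := by
    intro U V hUV j hj
    rw [hΦ, Finset.mem_filter] at hj ⊢
    exact ⟨hj.1, le_trans hj.2 (G.ret_mono hUV j)⟩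
  have hpost : Φ T ⊆ T := by
    intro j hj
    rw [hΦ, Finset.mem_filter] at hj
    by_contra hjT
    exact absurd hj.2 (not_le.2 (hnone j hjT))
  have hdec : ∀ k, Φ^[k+1] T ⊆ Φ^[k] T := by
    intro k
    induction k with
    | zero => simpa using hpost
    | succ k ih =>
      have h2 := hmono _ _ ih
      simp only [Function.iterate_succ_apply'] at h2 ⊢
      exact h2
  have hsubT : ∀ k, Φ^[k] T ⊆ T := by
    intro k
    induction k with
    | zero => exact le_refl T
    | succ k ih => exact le_trans (hdec k) ih
  -- stabilization
  obtain ⟨k, hk⟩ : ∃ k, (Φ^[k] T).card = sInf (Set.range fun k => (Φ^[k] T).card) :=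
    Nat.sInf_mem (Set.range_nonempty _)
  have hfix : Φ^[k+1] T = Φ^[k] T := by
    refine Finset.eq_of_subset_of_card_le (hdec k) ?_
    rw [hk]
    exact Nat.sInf_le ⟨k+1, rfl⟩
  set P := Φ^[k] T with hP
  have hPfix : Φ P = P := by
    rw [hP, ← Function.iterate_succ_apply' Φ k T]
    exact hfix
  have hNE : G.NashEq c P := by
    constructor
    · intro j hj
      rw [G.le_coopUtil_iff]
      have hj' : j ∈ Φ P := hPfix.symm ▸ hj
      rw [hΦ, Finset.mem_filter] at hj'
      rw [Finset.insert_eq_self.2 hj] at hj'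
      exact hj'.2
    · intro j hj
      rw [G.coopUtil_lt_iff]
      have hj' : j ∉ Φ P := fun h => hj (hPfix ▸ h)
      rw [hΦ, Finset.mem_filter] at hj'
      push_neg at hj'
      exact lt_of_not_ge fun h => absurd (hj' (Finset.mem_univ j)) (not_lt.2 h)
  have := hv.2.2 P hNE
  refine hT (Finset.eq_univ_of_forall fun j => hsubT k ?_)
  rw [hP] at this
  rw [this]
  exact Finset.mem_univ j

open SSHelp in
/-- If `c` is viable, there is an elimination order (as a list covering `Tᶜ`)
along which the `Gsum` lower bound on total collateral holds. -/
lemma elim_list {c : Fin n → ℝ} (hv : G.Viable c) :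
    ∀ (k : ℕ) (T : Finset (Fin n)), T.card + k = n →
      ∃ L : List (Fin n), L.Nodup ∧ L.toFinset = Tᶜ ∧
        Gsum G.α ((1 + G.α) * G.Z) (∑ j ∈ T, G.x j) (L.map G.x) ≤ ∑ j ∈ Tᶜ, c j := by
  intro k
  induction k with
  | zero =>
    intro T hT
    rw [Nat.add_zero] at hT
    have : T = Finset.univ := Finset.eq_univ_of_card T (by rw [hT]; simp)
    refine ⟨[], List.nodup_nil, ?_, ?_⟩
    · rw [this, Finset.compl_univ]; rfl
    · rw [List.map_nil, Gsum_nil]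
      exact Finset.sum_nonneg fun j _ => hv.1 j
  | succ k ih =>
    intro T hT
    have hTne : T ≠ Finset.univ := by
      intro h
      rw [h, Finset.card_univ, Fintype.card_fin] at hT
      omega
    obtain ⟨j, hjT, hret⟩ := G.progress hv T hTne
    obtain ⟨L', hnd, htf, hsum⟩ := ih (insert j T)
      (by rw [Finset.card_insert_of_notMem hjT]; omega)
    have hjc : j ∈ Tᶜ := Finset.mem_compl.2 hjT
    have hjL' : j ∉ L' := by
      intro h
      have : j ∈ (insert j T)ᶜ := htf ▸ List.mem_toFinset.2 h
      exact (Finset.mem_compl.1 this) (Finset.mem_insert_self j T)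
    refine ⟨j :: L', List.nodup_cons.2 ⟨hjL', hnd⟩, ?_, ?_⟩
    · rw [List.toFinset_cons, htf, Finset.compl_insert, Finset.insert_erase hjc]
    · rw [List.map_cons, Gsum_cons]
      have hins : ∑ i ∈ insert j T, G.x i = G.x j + ∑ i ∈ T, G.x i :=
        Finset.sum_insert hjT
      have hrete : G.ret (insert j T) j =
          G.x j * max 0 (1 + G.α - (1 + G.α) * G.Z / (∑ i ∈ T, G.x i + G.x j)) := by
        rw [G.ret_eq (G.sum_x_pos (Finset.mem_insert_self j T)), hins, add_comm (G.x j)]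
      -- the collateral lower bound for j
      have hcj : G.x j * wval G.α ((1 + G.α) * G.Z) (∑ i ∈ T, G.x i + G.x j) ≤ c j := by
        rw [hrete] at hret
        have hc0 : 0 ≤ c j := hv.1 j
        have hx : 0 < G.x j := G.x_pos j
        set t := (1 + G.α) * G.Z / (∑ i ∈ T, G.x i + G.x j) with ht
        rw [wval]
        rcases le_total (t - G.α) 0 with h2 | h2
        · rw [min_eq_right (by linarith : t - G.α ≤ 1), max_eq_left h2, mul_zero]
          exact hc0
        · rcases le_total (t - G.α) 1 with h1 | h1
          · rw [min_eq_right h1, max_eq_right h2]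
            have hM : max 0 (1 + G.α - t) = 1 + G.α - t := max_eq_right (by linarith)
            rw [hM] at hret
            nlinarith [hret]
          · rw [min_eq_left h1, max_eq_right (zero_le_one)]
            have hM : max 0 (1 + G.α - t) = 0 := max_eq_left (by linarith)
            rw [hM, mul_zero] at hret
            linarith
      have herase : Tᶜ.erase j = (insert j T)ᶜ := (Finset.compl_insert).symm
      have hsplit : ∑ i ∈ Tᶜ, c i = c j + ∑ i ∈ Tᶜ.erase j, c i :=
        (Finset.add_sum_erase _ _ hjc).symm
      rw [hsplit, herase]
      have : ∑ i ∈ T, G.x i + G.x j = ∑ i ∈ insert j T, G.x i := by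
        rw [hins]; ring
      rw [this]
      exact add_le_add (this ▸ hcj) hsum

open SSHelp in
/-- `Fsum` along a `rel`-sorted list equals the sum of the partial collaterals
defined through the `rel`-predecessor filters. -/
lemma fsum_eq_sum :
    ∀ (L : List (Fin n)), L.Nodup → L.Pairwise G.rel → ∀ b : ℝ,
      Fsum G.α ((1 + G.α) * G.Z) b (L.map G.x) =
        ∑ j ∈ L.toFinset, max 0 (G.x j * (1 - (1 + G.α) *
          (1 - G.Z / (b + ∑ j' ∈ L.toFinset.filter (fun j' => G.rel j' j), G.x j')))) := by
  intro L
  induction L with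
  | nil => intro _ _ b; simp
  | cons a L' ih =>
    intro hnd hsort b
    have haL' : a ∉ L' := (List.nodup_cons.1 hnd).1
    have hnd' : L'.Nodup := (List.nodup_cons.1 hnd).2
    have hrelaL : ∀ j ∈ L', G.rel a j := (List.pairwise_cons.1 hsort).1
    have hsort' : L'.Pairwise G.rel := (List.pairwise_cons.1 hsort).2
    have haT' : a ∉ L'.toFinset := fun h => haL' (List.mem_toFinset.1 h)
    have hfa : (insert a L'.toFinset).filter (fun j' => G.rel j' a) = {a} := by
      ext j'
      simp only [Finset.mem_filter, Finset.mem_insert, Finset.mem_singleton]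
      constructor
      · rintro ⟨h | h, hr⟩
        · exact h
        · exact G.rel_antisymm hr (hrelaL j' (List.mem_toFinset.1 h))
      · rintro rfl
        exact ⟨Or.inl rfl, G.rel_refl j'⟩
    have hfj : ∀ j ∈ L'.toFinset, (insert a L'.toFinset).filter (fun j' => G.rel j' j) =
        insert a (L'.toFinset.filter (fun j' => G.rel j' j)) := by
      intro j hj
      ext j'
      simp only [Finset.mem_filter, Finset.mem_insert]
      constructor
      · rintro ⟨h | h, hr⟩
        · exact Or.inl h
        · exact Or.inr ⟨h, hr⟩
      · rintro (rfl | ⟨h, hr⟩)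
        · exact ⟨Or.inl rfl, hrelaL j (List.mem_toFinset.1 hj)⟩
        · exact ⟨Or.inr h, hr⟩
    rw [List.map_cons, Fsum_cons, ih hnd' hsort' (b + G.x a), List.toFinset_cons,
      Finset.sum_insert haT']
    congr 1
    · rw [hfa, Finset.sum_singleton, mval, mul_max_of_nonneg _ _ (G.x_pos a).le, mul_zero]
      congr 1
      ring
    · refine Finset.sum_congr rfl fun j hj => ?_
      rw [hfj j hj, Finset.sum_insert (fun h => haT' (Finset.filter_subset _ _ h)),
        ← add_assoc]

/-- the complement of `S` sorted in the processing order. -/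
noncomputable def sortedCompl (S : Finset (Fin n)) : List (Fin n) :=
  @Finset.sort _ Sᶜ G.rel (Classical.decRel _)
    ⟨fun _ _ _ h1 h2 => G.rel_trans h1 h2⟩
    ⟨fun _ _ h1 h2 => G.rel_antisymm h1 h2⟩
    ⟨fun a b => G.rel_total a b⟩

lemma sortedCompl_nodup (S : Finset (Fin n)) : (G.sortedCompl S).Nodup :=
  @Finset.sort_nodup _ Sᶜ G.rel (Classical.decRel _)
    ⟨fun _ _ _ h1 h2 => G.rel_trans h1 h2⟩
    ⟨fun _ _ h1 h2 => G.rel_antisymm h1 h2⟩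
    ⟨fun a b => G.rel_total a b⟩

lemma sortedCompl_toFinset (S : Finset (Fin n)) : (G.sortedCompl S).toFinset = Sᶜ :=
  @Finset.sort_toFinset _ Sᶜ G.rel (Classical.decRel _)
    ⟨fun _ _ _ h1 h2 => G.rel_trans h1 h2⟩
    ⟨fun _ _ h1 h2 => G.rel_antisymm h1 h2⟩
    ⟨fun a b => G.rel_total a b⟩ _

lemma sortedCompl_sorted (S : Finset (Fin n)) : (G.sortedCompl S).Pairwise G.rel :=
  @Finset.pairwise_sort _ Sᶜ G.rel (Classical.decRel _)
    ⟨fun _ _ _ h1 h2 => G.rel_trans h1 h2⟩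
    ⟨fun _ _ h1 h2 => G.rel_antisymm h1 h2⟩
    ⟨fun a b => G.rel_total a b⟩

open SSHelp in
lemma total_subsetCollateral (S : Finset (Fin n)) :
    total (G.subsetCollateral S) = (∑ j ∈ S, G.x j) +
      Fsum G.α ((1 + G.α) * G.Z) (∑ j ∈ S, G.x j) ((G.sortedCompl S).map G.x) := by
  rw [G.fsum_eq_sum _ (G.sortedCompl_nodup S) (G.sortedCompl_sorted S), G.sortedCompl_toFinset]
  rw [total, ← Finset.sum_add_sum_compl S]
  congr 1
  · exact Finset.sum_congr rfl fun i hi => by rw [subsetCollateral, if_pos hi]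
  · refine Finset.sum_congr rfl fun i hi => ?_
    rw [subsetCollateral, if_neg (Finset.mem_compl.1 hi), G.filter_eq]

open SSHelp in
lemma split_exists :
    ∀ (L : List (Fin n)), L.Nodup → ∀ S₀ : Finset (Fin n), L.toFinset = S₀ᶜ →
      ∃ S : Finset (Fin n), total (G.subsetCollateral S) ≤
        (∑ j ∈ S₀, G.x j) + Gsum G.α ((1 + G.α) * G.Z) (∑ j ∈ S₀, G.x j) (L.map G.x) := by
  intro L
  induction L with
  | nil =>
    intro _ S₀ htf
    have hS₀ : S₀ = Finset.univ := by
      have : S₀ᶜ = (∅ : Finset (Fin n)) := by rw [← htf]; rfl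
      rwa [Finset.compl_eq_empty_iff] at this
    refine ⟨Finset.univ, ?_⟩
    rw [List.map_nil, Gsum_nil, add_zero, hS₀]
    have : total (G.subsetCollateral Finset.univ) = ∑ j, G.x j :=
      Finset.sum_congr rfl fun i hi => by rw [subsetCollateral, if_pos hi]
    rw [this]
  | cons j L' ih =>
    intro hnd S₀ htf
    have hjL' : j ∉ L' := (List.nodup_cons.1 hnd).1
    have hnd' : L'.Nodup := (List.nodup_cons.1 hnd).2
    have hjc : j ∈ S₀ᶜ := by
      rw [← htf, List.toFinset_cons]
      exact Finset.mem_insert_self j _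
    have hjS₀ : j ∉ S₀ := Finset.mem_compl.1 hjc
    have htf' : L'.toFinset = (insert j S₀)ᶜ := by
      rw [Finset.compl_insert, ← htf, List.toFinset_cons,
        Finset.erase_insert (fun h => hjL' (List.mem_toFinset.1 h))]
    have hb : 0 ≤ ∑ i ∈ S₀, G.x i := G.sum_x_nonneg S₀
    have hxj : 0 < G.x j := G.x_pos j
    rcases le_total 1 ((1 + G.α) * G.Z / (∑ i ∈ S₀, G.x i + G.x j) - G.α) with hc | hc
    · -- j also gets a full collateral
      obtain ⟨S, hS⟩ := ih hnd' (insert j S₀) htf'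
      refine ⟨S, le_trans hS ?_⟩
      have hins : ∑ i ∈ insert j S₀, G.x i = ∑ i ∈ S₀, G.x i + G.x j := by
        rw [Finset.sum_insert hjS₀]; ring
      rw [hins, List.map_cons, Gsum_cons, wval_eq_one hc, mul_one]
      linarith
    · -- stop: all later players get partial collaterals
      refine ⟨S₀, ?_⟩
      rw [G.total_subsetCollateral S₀]
      have hposL' : ∀ y ∈ L'.map G.x, 0 < y := by
        intro y hy
        obtain ⟨i, _, rfl⟩ := List.mem_map.1 hy
        exact G.x_pos i
      have hs₁ : 0 < ∑ i ∈ S₀, G.x i + G.x j := by linarith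
      have hC : (1 + G.α) * G.Z ≤ (1 + G.α) * (∑ i ∈ S₀, G.x i + G.x j) := by
        have hc2 : (1 + G.α) * G.Z / (∑ i ∈ S₀, G.x i + G.x j) ≤ 1 + G.α := by linarith
        calc (1 + G.α) * G.Z = (1 + G.α) * G.Z / (∑ i ∈ S₀, G.x i + G.x j) *
              (∑ i ∈ S₀, G.x i + G.x j) := by field_simp
          _ ≤ (1 + G.α) * (∑ i ∈ S₀, G.x i + G.x j) :=
              mul_le_mul_of_nonneg_right hc2 hs₁.le
      have hGF : Gsum G.α ((1 + G.α) * G.Z) (∑ i ∈ S₀, G.x i) ((j :: L').map G.x) =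
          Fsum G.α ((1 + G.α) * G.Z) (∑ i ∈ S₀, G.x i) ((j :: L').map G.x) := by
        rw [List.map_cons, Gsum_cons, Fsum_cons,
          wval_eq_mval hc, Gsum_eq_Fsum G.α_pos.le _ _ hposL' hs₁ hC]
      rw [hGF]
      refine (add_le_add_iff_left _).2 ?_
      refine Fsum_sorted_le G.α_pos.le (by nlinarith [G.Z_nonneg, G.α_pos]) ?_ ?_ ?_ hb
      · -- perm
        refine List.Perm.map G.x (List.perm_of_nodup_nodup_toFinset_eq
          (G.sortedCompl_nodup S₀) hnd ?_)
        rw [G.sortedCompl_toFinset, htf]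
      · -- sortedness of the value list
        refine List.Pairwise.map _ ?_ (G.sortedCompl_sorted S₀)
        intro a b hab
        rcases hab with h | ⟨h, _⟩
        · exact le_of_lt h
        · exact le_of_eq h.symm
      · intro y hy
        obtain ⟨i, _, rfl⟩ := List.mem_map.1 hy
        exact G.x_pos i

end StarGame

/-- **Correctness of the subset-selection procedure (Corollary 2).**  Every
collateral vector `c(S)` produced by the procedure is viable, and the minimum
over all subsets `S` of the total collateral of `c(S)` equals the optimal
value of the single-enterprise collateral minimization problem. -/
theorem subset_selection_correct {n : ℕ} (G : StarGame n) :
    (∀ S : Finset (Fin n), G.Viable (G.subsetCollateral S)) ∧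
      ∀ c : Fin n → ℝ, G.Viable c →
        ∃ S : Finset (Fin n),
          StarGame.total (G.subsetCollateral S) ≤ StarGame.total c := by
  refine ⟨G.viable_subsetCollateral, ?_⟩
  intro c hv
  obtain ⟨L, hnd, htf, hsum⟩ := G.elim_list hv n ∅ (by simp)
  obtain ⟨S, hS⟩ := G.split_exists L hnd ∅ htf
  rw [Finset.compl_empty] at hsum
  simp only [Finset.sum_empty] at hS hsum
  refine ⟨S, le_trans hS ?_⟩
  rw [StarGame.total]
  linarith
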